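/- Let X ⊂ ℝ^p, Y ⊂ ℝ^q be compact sets, α, β nonzero finite positive Radon measures on X, Y, φ₁, φ₂ entropy functions, r > 0, ε ≥ 0. If (M*, π*) minimizes the objective (M,π) ↦ −∫⟨Mx,y⟩ dπ + D_{φ₁}(π₁‖α) + D_{φ₂}(π₂‖β) + ε·D_KL(π‖α⊗β) over F_r × M⁺(X×Y), then π* minimizes the reduced functional G_ε(π) = −r·‖C(π)‖_F + D_{φ₁}(π₁‖α) + D_{φ₂}(π₂‖β) + ε·D_KL(π‖α⊗β) over all π ∈ M⁺(X×Y), where C(π) = ∫ y xᵀ dπ; moreover the optimal values of the two problems coincide. -/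

import Mathlib

open MeasureTheory Filter Set Pointwise
open scoped ENNReal NNReal

noncomputable section

/-- The recession slope `φ'_∞ = lim_{x→∞} φ(x)/x` of an entropy function. -/
def phiRecession (φ : ℝ → ℝ≥0∞) : ℝ≥0∞ :=
  Filter.limsup (fun x : ℝ => φ x / ENNReal.ofReal x) Filter.atTop

/-- An entropy function: convex, lower semicontinuous `φ : [0,∞) → [0,∞]` with `φ(1) = 0`. -/
def IsEntropyFunction (φ : ℝ → ℝ≥0∞) : Prop :=
  φ 1 = 0 ∧ LowerSemicontinuous φ ∧
    ∀ x ∈ Set.Ici (0 : ℝ), ∀ y ∈ Set.Ici (0 : ℝ), ∀ t ∈ Set.Icc (0 : ℝ) 1,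
      φ (t * x + (1 - t) * y) ≤ ENNReal.ofReal t * φ x + ENNReal.ofReal (1 - t) * φ y

/-- Strict convexity of an entropy function on its (finiteness) domain. -/
def IsStrictlyConvexEntropy (φ : ℝ → ℝ≥0∞) : Prop :=
  ∀ x ∈ Set.Ici (0 : ℝ), ∀ y ∈ Set.Ici (0 : ℝ), x ≠ y → φ x ≠ ⊤ → φ y ≠ ⊤ →
    ∀ t ∈ Set.Ioo (0 : ℝ) 1,
      φ (t * x + (1 - t) * y) < ENNReal.ofReal t * φ x + ENNReal.ofReal (1 - t) * φ y

/-- `dom φ = {x ∈ [0,∞) : φ(x) < ∞}`. -/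
def phiDom (φ : ℝ → ℝ≥0∞) : Set ℝ := {x | 0 ≤ x ∧ φ x ≠ ⊤}

/-- The entropy function `ι_{{1}}`: `0` at `1` and `+∞` elsewhere. -/
def iotaOne : ℝ → ℝ≥0∞ := fun x => if x = 1 then 0 else ⊤

/-- The φ-divergence `D_φ(μ‖ν) = ∫ φ(dμ/dν) dν + φ'_∞ · μ^⊥(univ)`. -/
def phiDiv {Z : Type*} [MeasurableSpace Z] (φ : ℝ → ℝ≥0∞) (μ ν : Measure Z) : ℝ≥0∞ :=
  (∫⁻ z, φ ((μ.rnDeriv ν z).toReal) ∂ν) + phiRecession φ * μ.singularPart ν Set.univ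

/-- The entropy function `φ_KL(x) = x log x − x + 1` generating the KL divergence. -/
def phiKL : ℝ → ℝ≥0∞ := fun x => ENNReal.ofReal (x * Real.log x - x + 1)

/-- The strong compatibility condition (C2). -/
def StrongCompat (φ₁ φ₂ : ℝ → ℝ≥0∞) (mα mβ : ℝ) : Prop :=
  ((interior (mα • phiDom φ₁) ∩ (mβ • phiDom φ₂)) ∪
    ((mα • phiDom φ₁) ∩ interior (mβ • phiDom φ₂))).Nonempty

/-- The Frobenius norm of a real `q × p` matrix. -/
def frobNorm {q p : ℕ} (M : Matrix (Fin q) (Fin p) ℝ) : ℝ :=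
  Real.sqrt (∑ i, ∑ j, (M i j) ^ 2)

/-- `C(π) = ∫ y xᵀ dπ(x,y)`, the entrywise integral of `(x,y) ↦ y xᵀ`. -/
def Cmat {p q : ℕ} (π : Measure ((Fin p → ℝ) × (Fin q → ℝ))) :
    Matrix (Fin q) (Fin p) ℝ :=
  Matrix.of fun i j => ∫ z, z.2 i * z.1 j ∂π

/-- `∫ ⟨Mx, y⟩ dπ(x,y)` with the Euclidean inner product on `ℝ^q`. -/
def ipIntegral {p q : ℕ} (M : Matrix (Fin q) (Fin p) ℝ)
    (π : Measure ((Fin p → ℝ) × (Fin q → ℝ))) : ℝ :=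
  ∫ z, ∑ i, ∑ j, M i j * z.1 j * z.2 i ∂π

/-- `M(π) = r·C(π)/‖C(π)‖_F` if `C(π) ≠ 0`, and `0` otherwise. -/
def Mopt {p q : ℕ} (r : ℝ) (π : Measure ((Fin p → ℝ) × (Fin q → ℝ))) :
    Matrix (Fin q) (Fin p) ℝ :=
  if Cmat π = 0 then 0 else (r / frobNorm (Cmat π)) • Cmat π

/-- The objective of `CR_rUOT_ε(α,β)`:
`(M,π) ↦ −∫⟨Mx,y⟩ dπ + D_{φ₁}(π₁‖α) + D_{φ₂}(π₂‖β) + ε·D_KL(π‖α⊗β)`. -/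
def Jip {p q : ℕ} (α : Measure (Fin p → ℝ)) (β : Measure (Fin q → ℝ))
    (φ₁ φ₂ : ℝ → ℝ≥0∞) (ε : ℝ) (M : Matrix (Fin q) (Fin p) ℝ)
    (π : Measure ((Fin p → ℝ) × (Fin q → ℝ))) : EReal :=
  ((-(ipIntegral M π) : ℝ) : EReal)
    + ((phiDiv φ₁ (π.map Prod.fst) α : ℝ≥0∞) : EReal)
    + ((phiDiv φ₂ (π.map Prod.snd) β : ℝ≥0∞) : EReal)
    + ((ENNReal.ofReal ε * phiDiv phiKL π (α.prod β) : ℝ≥0∞) : EReal)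

/-- The reduced functional
`G_ε(π) = −r·‖C(π)‖_F + D_{φ₁}(π₁‖α) + D_{φ₂}(π₂‖β) + ε·D_KL(π‖α⊗β)`. -/
def Gred {p q : ℕ} (α : Measure (Fin p → ℝ)) (β : Measure (Fin q → ℝ))
    (φ₁ φ₂ : ℝ → ℝ≥0∞) (ε r : ℝ)
    (π : Measure ((Fin p → ℝ) × (Fin q → ℝ))) : EReal :=
  ((-(r * frobNorm (Cmat π)) : ℝ) : EReal)
    + ((phiDiv φ₁ (π.map Prod.fst) α : ℝ≥0∞) : EReal)
    + ((phiDiv φ₂ (π.map Prod.snd) β : ℝ≥0∞) : EReal)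
    + ((ENNReal.ofReal ε * phiDiv phiKL π (α.prod β) : ℝ≥0∞) : EReal)

section auxlemmas

variable {p q : ℕ}

lemma frobNorm_nonneg (M : Matrix (Fin q) (Fin p) ℝ) : 0 ≤ frobNorm M :=
  Real.sqrt_nonneg _

lemma frobNorm_zero : frobNorm (0 : Matrix (Fin q) (Fin p) ℝ) = 0 := by
  simp [frobNorm]

lemma frobNorm_pos {M : Matrix (Fin q) (Fin p) ℝ} (h : M ≠ 0) : 0 < frobNorm M := by
  apply Real.sqrt_pos.mpr
  rcases lt_or_eq_of_le (show (0:ℝ) ≤ ∑ i, ∑ j, (M i j) ^ 2 by positivity) with h' | h'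
  · exact h'
  · exfalso
    apply h
    ext i j
    have h1 : ∀ i ∈ (Finset.univ : Finset (Fin q)), ∑ j, (M i j) ^ 2 = 0 := by
      rw [← Finset.sum_eq_zero_iff_of_nonneg (fun i _ => by positivity)]
      exact h'.symm
    have h2 := (Finset.sum_eq_zero_iff_of_nonneg (fun j _ => by positivity)).mp
      (h1 i (Finset.mem_univ i)) j (Finset.mem_univ j)
    have := pow_eq_zero_iff (n := 2) (by norm_num) |>.mp h2
    simpa using this

lemma frobNorm_smul (c : ℝ) (M : Matrix (Fin q) (Fin p) ℝ) :
    frobNorm (c • M) = |c| * frobNorm M := by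
  unfold frobNorm
  rw [← Real.sqrt_sq_eq_abs, ← Real.sqrt_mul (sq_nonneg c)]
  congr 1
  rw [Finset.mul_sum]
  refine Finset.sum_congr rfl fun i _ => ?_
  rw [Finset.mul_sum]
  refine Finset.sum_congr rfl fun j _ => ?_
  simp [Matrix.smul_apply, mul_pow]

lemma integrable_entry {X : Set (Fin p → ℝ)} {Y : Set (Fin q → ℝ)}
    (hX : IsCompact X) (hY : IsCompact Y)
    (π : Measure ((Fin p → ℝ) × (Fin q → ℝ))) [IsFiniteMeasure π]
    (hπsupp : π ((X ×ˢ Y)ᶜ) = 0) (i : Fin q) (j : Fin p) :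
    Integrable (fun z : (Fin p → ℝ) × (Fin q → ℝ) => z.2 i * z.1 j) π := by
  have hcont : Continuous (fun z : (Fin p → ℝ) × (Fin q → ℝ) => z.2 i * z.1 j) := by
    fun_prop
  obtain ⟨B, hB⟩ := (hX.prod hY).exists_bound_of_continuousOn hcont.continuousOn
  have hae : ∀ᵐ z ∂π, z ∈ X ×ˢ Y := by
    rw [MeasureTheory.ae_iff]
    convert hπsupp using 2
    rfl
  refine Integrable.mono' (integrable_const B) hcont.aestronglyMeasurable ?_
  filter_upwards [hae] with z hz using hB z hz

lemma ipIntegral_eq (M : Matrix (Fin q) (Fin p) ℝ)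
    (π : Measure ((Fin p → ℝ) × (Fin q → ℝ))) [IsFiniteMeasure π]
    (hint : ∀ (i : Fin q) (j : Fin p),
      Integrable (fun z : (Fin p → ℝ) × (Fin q → ℝ) => z.2 i * z.1 j) π) :
    ipIntegral M π = ∑ i, ∑ j, M i j * Cmat π i j := by
  unfold ipIntegral Cmat
  have key : ∀ (i : Fin q) (j : Fin p),
      (fun z : (Fin p → ℝ) × (Fin q → ℝ) => M i j * z.1 j * z.2 i)
        = fun z => M i j * (z.2 i * z.1 j) := by
    intro i j; ext z; ring
  rw [integral_finset_sum]
  · refine Finset.sum_congr rfl fun i _ => ?_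
    rw [integral_finset_sum]
    · refine Finset.sum_congr rfl fun j _ => ?_
      rw [key i j, integral_const_mul]
      simp [Matrix.of_apply]
    · intro j _
      rw [key i j]
      exact (hint i j).const_mul _
  · intro i _
    apply integrable_finset_sum
    intro j _
    rw [key i j]
    exact (hint i j).const_mul _

lemma ip_le (M : Matrix (Fin q) (Fin p) ℝ) (C : Matrix (Fin q) (Fin p) ℝ) :
    ∑ i, ∑ j, M i j * C i j ≤ frobNorm M * frobNorm C := by
  have h := Real.sum_mul_le_sqrt_mul_sqrt (Finset.univ : Finset (Fin q × Fin p))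
    (fun x => M x.1 x.2) (fun x => C x.1 x.2)
  simpa [frobNorm, Fintype.sum_prod_type] using h

lemma ipIntegral_Mopt (r : ℝ) (hr : 0 < r)
    (π : Measure ((Fin p → ℝ) × (Fin q → ℝ))) [IsFiniteMeasure π]
    (hint : ∀ (i : Fin q) (j : Fin p),
      Integrable (fun z : (Fin p → ℝ) × (Fin q → ℝ) => z.2 i * z.1 j) π) :
    ipIntegral (Mopt r π) π = r * frobNorm (Cmat π) := by
  rw [ipIntegral_eq _ _ hint]
  unfold Mopt
  by_cases hC : Cmat π = 0
  · simp [hC, frobNorm_zero]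
  · have hpos := frobNorm_pos hC
    simp only [hC, if_false, Matrix.smul_apply, smul_eq_mul]
    have : ∑ i, ∑ j, r / frobNorm (Cmat π) * Cmat π i j * Cmat π i j
        = r / frobNorm (Cmat π) * ∑ i, ∑ j, (Cmat π i j) ^ 2 := by
      rw [Finset.mul_sum]
      refine Finset.sum_congr rfl fun i _ => ?_
      rw [Finset.mul_sum]
      refine Finset.sum_congr rfl fun j _ => ?_
      ring
    rw [this]
    have hsq : ∑ i, ∑ j, (Cmat π i j) ^ 2 = (frobNorm (Cmat π)) ^ 2 := by
      rw [frobNorm, Real.sq_sqrt (by positivity)]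
    rw [hsq]
    field_simp

lemma frobNorm_Mopt_le (r : ℝ) (hr : 0 < r)
    (π : Measure ((Fin p → ℝ) × (Fin q → ℝ))) :
    frobNorm (Mopt r π) ≤ r := by
  unfold Mopt
  by_cases hC : Cmat π = 0
  · simp [hC, frobNorm_zero, hr.le]
  · have hpos := frobNorm_pos hC
    rw [if_neg hC, frobNorm_smul]
    rw [abs_of_nonneg (by positivity)]
    rw [div_mul_cancel₀ _ hpos.ne']

lemma Jip_mono {α : Measure (Fin p → ℝ)} {β : Measure (Fin q → ℝ)}
    {φ₁ φ₂ : ℝ → ℝ≥0∞} {ε : ℝ} {x y : ℝ}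
    {π : Measure ((Fin p → ℝ) × (Fin q → ℝ))} (h : x ≤ y) :
    ((x : ℝ) : EReal)
      + ((phiDiv φ₁ (π.map Prod.fst) α : ℝ≥0∞) : EReal)
      + ((phiDiv φ₂ (π.map Prod.snd) β : ℝ≥0∞) : EReal)
      + ((ENNReal.ofReal ε * phiDiv phiKL π (α.prod β) : ℝ≥0∞) : EReal)
    ≤ ((y : ℝ) : EReal)
      + ((phiDiv φ₁ (π.map Prod.fst) α : ℝ≥0∞) : EReal)
      + ((phiDiv φ₂ (π.map Prod.snd) β : ℝ≥0∞) : EReal)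
      + ((ENNReal.ofReal ε * phiDiv phiKL π (α.prod β) : ℝ≥0∞) : EReal) := by
  refine add_le_add (add_le_add (add_le_add ?_ le_rfl) le_rfl) le_rfl
  exact_mod_cast h

end auxlemmas

/-- **Reduction to the functional `G_ε`.** If `(M*, π*)` minimizes the inner-product
cost-regularized UOT objective over `F_r × M⁺(X×Y)`, then `π*` minimizes the reduced
functional `G_ε` over `M⁺(X×Y)`, and the optimal values coincide. -/
theorem stmt9 {p q : ℕ}
    (X : Set (Fin p → ℝ)) (Y : Set (Fin q → ℝ))
    (hX : IsCompact X) (hY : IsCompact Y)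
    (α : Measure (Fin p → ℝ)) (β : Measure (Fin q → ℝ))
    [IsFiniteMeasure α] [IsFiniteMeasure β]
    (hα : α ≠ 0) (hβ : β ≠ 0)
    (hαsupp : α Xᶜ = 0) (hβsupp : β Yᶜ = 0)
    (φ₁ φ₂ : ℝ → ℝ≥0∞)
    (hφ₁ : IsEntropyFunction φ₁) (hφ₂ : IsEntropyFunction φ₂)
    (r : ℝ) (hr : 0 < r) (ε : ℝ) (hε : 0 ≤ ε)
    (Mstar : Matrix (Fin q) (Fin p) ℝ)
    (πstar : Measure ((Fin p → ℝ) × (Fin q → ℝ)))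
    (hMstar : frobNorm Mstar ≤ r) (hπfin : IsFiniteMeasure πstar)
    (hπsupp : πstar ((X ×ˢ Y)ᶜ) = 0)
    (hmin : ∀ (M : Matrix (Fin q) (Fin p) ℝ)
      (π : Measure ((Fin p → ℝ) × (Fin q → ℝ))),
      frobNorm M ≤ r → IsFiniteMeasure π → π ((X ×ˢ Y)ᶜ) = 0 →
      Jip α β φ₁ φ₂ ε Mstar πstar ≤ Jip α β φ₁ φ₂ ε M π) :
    (∀ π : Measure ((Fin p → ℝ) × (Fin q → ℝ)),
      IsFiniteMeasure π → π ((X ×ˢ Y)ᶜ) = 0 →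
      Gred α β φ₁ φ₂ ε r πstar ≤ Gred α β φ₁ φ₂ ε r π) ∧
    Jip α β φ₁ φ₂ ε Mstar πstar = Gred α β φ₁ φ₂ ε r πstar := by
  -- For any admissible π, Gred π = Jip (Mopt r π) π.
  have hGJ : ∀ π : Measure ((Fin p → ℝ) × (Fin q → ℝ)),
      IsFiniteMeasure π → π ((X ×ˢ Y)ᶜ) = 0 →
      Gred α β φ₁ φ₂ ε r π = Jip α β φ₁ φ₂ ε (Mopt r π) π := by
    intro π hfin hsupp
    haveI := hfin
    have hint := fun i j => integrable_entry hX hY π hsupp i j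
    have hip : ipIntegral (Mopt r π) π = r * frobNorm (Cmat π) :=
      ipIntegral_Mopt r hr π hint
    unfold Gred Jip
    rw [hip]
  haveI := hπfin
  have hint0 := fun i j => integrable_entry hX hY πstar hπsupp i j
  -- Gred πstar ≤ Jip Mstar πstar by Cauchy–Schwarz.
  have hCS : Gred α β φ₁ φ₂ ε r πstar ≤ Jip α β φ₁ φ₂ ε Mstar πstar := by
    unfold Gred Jip
    apply Jip_mono
    rw [neg_le_neg_iff, ipIntegral_eq Mstar πstar hint0]
    calc ∑ i, ∑ j, Mstar i j * Cmat πstar i j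
        ≤ frobNorm Mstar * frobNorm (Cmat πstar) := ip_le _ _
      _ ≤ r * frobNorm (Cmat πstar) := by
          apply mul_le_mul_of_nonneg_right hMstar (frobNorm_nonneg _)
  -- Jip Mstar πstar ≤ Gred πstar via minimality against (Mopt r πstar, πstar).
  have hJG : Jip α β φ₁ φ₂ ε Mstar πstar ≤ Gred α β φ₁ φ₂ ε r πstar := by
    rw [hGJ πstar hπfin hπsupp]
    exact hmin (Mopt r πstar) πstar (frobNorm_Mopt_le r hr πstar) hπfin hπsupp
  have heq : Jip α β φ₁ φ₂ ε Mstar πstar = Gred α β φ₁ φ₂ ε r πstar :=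
    le_antisymm hJG hCS
  refine ⟨fun π hfin hsupp => ?_, heq⟩
  calc Gred α β φ₁ φ₂ ε r πstar = Jip α β φ₁ φ₂ ε Mstar πstar := heq.symm
    _ ≤ Jip α β φ₁ φ₂ ε (Mopt r π) π :=
        hmin (Mopt r π) π (frobNorm_Mopt_le r hr π) hfin hsupp
    _ = Gred α β φ₁ φ₂ ε r π := (hGJ π hfin hsupp).symm
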